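/- Let (v_1,…,v_N,d) be a weight system and let R ⊆ (ℤ_{≥0}^N)_d be any subset. Then R satisfies condition (C1) if and only if R satisfies condition (C1)', i.e. it suffices to verify (C1) for the nonempty subsets J ⊆ I with |J| ≤ (N+1)/2. -/

import Mathlib

open MvPolynomial

/-- The `k`-th standard basis vector `e_k` of `ℤ_{≥0}^N`. -/
def stdBasisVec {N : ℕ} (k : Fin N) : Fin N → ℕ := fun i => if i = k then 1 else 0

/-- The slice `(ℤ_{≥0}^N)_k` of the lattice, with respect to the weights `v`. -/
def latAt {N : ℕ} (v : Fin N → ℕ) (k : ℕ) : Set (Fin N → ℕ) := {α | ∑ i, α i * v i = k}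

/-- `ℤ_{≥0}^J`, the lattice points supported in `J`. -/
def cubeJ {N : ℕ} (J : Finset (Fin N)) : Set (Fin N → ℕ) := {α | ∀ i, i ∉ J → α i = 0}

/-- The set `R_k = {α ∈ (ℤ_{≥0}^N)_{d-v_k} | α + e_k ∈ R}`. -/
def shiftR {N : ℕ} (v : Fin N → ℕ) (d : ℕ) (R : Set (Fin N → ℕ)) (k : Fin N) :
    Set (Fin N → ℕ) :=
  {α | α ∈ latAt v (d - v k) ∧ α + stdBasisVec k ∈ R}

/-- Condition (C1). -/
def CondC1 {N : ℕ} (v : Fin N → ℕ) (d : ℕ) (R : Set (Fin N → ℕ)) : Prop :=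
  ∀ J : Finset (Fin N), J.Nonempty →
    (R ∩ cubeJ J).Nonempty ∨
      ∃ K : Finset (Fin N), K ⊆ Jᶜ ∧ K.card = J.card ∧
        ∀ k ∈ K, (shiftR v d R k ∩ cubeJ J).Nonempty

/-- Condition (C2). -/
def CondC2 {N : ℕ} (v : Fin N → ℕ) (d : ℕ) (R : Set (Fin N → ℕ)) : Prop :=
  ∀ J : Finset (Fin N), J.Nonempty →
    ∃ K : Finset (Fin N), K.card = J.card ∧
      ∀ k ∈ K, (shiftR v d R k ∩ cubeJ J).Nonempty

/-- Condition (C1)': condition (C1) restricted to the subsets `J` with `|J| ≤ (N+1)/2`. -/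
def CondC1' {N : ℕ} (v : Fin N → ℕ) (d : ℕ) (R : Set (Fin N → ℕ)) : Prop :=
  ∀ J : Finset (Fin N), J.Nonempty → 2 * J.card ≤ N + 1 →
    (R ∩ cubeJ J).Nonempty ∨
      ∃ K : Finset (Fin N), K ⊆ Jᶜ ∧ K.card = J.card ∧
        ∀ k ∈ K, (shiftR v d R k ∩ cubeJ J).Nonempty

/-- Lemma 2.1 of Hertling–Kurbel: conditions (C1) and (C1)' are equivalent
for any subset `R ⊆ (ℤ_{≥0}^N)_d` and any weight system `(v_1,…,v_N,d)`. -/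
theorem condC1_iff_condC1' (N : ℕ) (hN : 1 ≤ N) (v : Fin N → ℕ) (d : ℕ)
    (hv : ∀ i, 0 < v i) (hvd : ∀ i, v i < d)
    (R : Set (Fin N → ℕ)) (hR : R ⊆ latAt v d) :
    CondC1 v d R ↔ CondC1' v d R := by
  constructor
  · intro h J hJ _
    exact h J hJ
  · intro h J hJ
    by_cases hbig : 2 * J.card ≤ N + 1
    · exact h J hJ hbig
    · -- large J: show (a) directly
      push_neg at hbig
      have hJN : J.card ≤ N := by
        simpa using Finset.card_le_univ J
      have hm : N - J.card + 1 ≤ J.card := by omega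
      obtain ⟨J₀, hJ₀sub, hJ₀card⟩ := Finset.exists_subset_card_eq (s := J) (n := N - J.card + 1) hm
      have hJ₀ne : J₀.Nonempty := Finset.card_pos.mp (by omega)
      have hJ₀small : 2 * J₀.card ≤ N + 1 := by omega
      rcases h J₀ hJ₀ne hJ₀small with ⟨α, hαR, hαc⟩ | ⟨K, hKc, hKcard, hK⟩
      · left
        exact ⟨α, hαR, fun i hi => hαc i (fun hmem => hi (hJ₀sub hmem))⟩
      · -- K has card N - |J| + 1 > |Jᶜ|, so it meets J
        have hKJ : ∃ k ∈ K, k ∈ J := by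
          by_contra hc
          push_neg at hc
          have : K ⊆ Jᶜ := fun k hk => Finset.mem_compl.mpr (hc k hk)
          have := Finset.card_le_card this
          rw [Finset.card_compl] at this
          simp only [Fintype.card_fin] at this
          omega
        obtain ⟨k, hkK, hkJ⟩ := hKJ
        obtain ⟨α, ⟨_, hαR⟩, hαc⟩ := hK k hkK
        left
        refine ⟨α + stdBasisVec k, hαR, fun i hi => ?_⟩
        have h1 : α i = 0 := hαc i (fun hmem => hi (hJ₀sub hmem))
        have h2 : stdBasisVec k i = 0 := by
          simp only [stdBasisVec]
          rw [if_neg]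
          intro hik
          exact hi (hik ▸ hkJ)
        simp [Pi.add_apply, h1, h2]
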